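/- Let k ≥ 2 be an integer and let L be a nonempty language over an alphabet of size k (a nonempty set of finite lists over Fin k). Suppose there exist functions Pad : Σ* × Σ* → Σ* and Dec : Σ* → Σ* such that for all words x, y: (i) Pad(x, y) ∈ L ⟺ x ∈ L, (ii) Dec(Pad(x, y)) = y, and (iii) there is a polynomial p with |Pad(x, y)| ≤ p(|x| + |y|) for all x, y, where |·| denotes word length. Then L is not sparse: there is no polynomial q such that for all n ∈ ℕ, the number of words w ∈ L with |w| ≤ n is at most q(n). -/

import Mathlib

/-- Polynomials (in the sense of `C * n ^ d`) grow slower than `2 ^ n`. -/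
lemma aux_exists_lt_two_pow (C d : ℕ) : ∃ n : ℕ, 1 ≤ n ∧ C * n ^ d < 2 ^ n := by
  set a := d + C + 1 with ha
  refine ⟨2 ^ 2 ^ a, Nat.one_le_two_pow, ?_⟩
  have h1 : C < 2 ^ a := lt_of_lt_of_le (by omega) (Nat.lt_two_pow_self (n := a)).le
  have h2 : a + 2 ^ a * d < 2 ^ 2 ^ a := by
    calc a + 2 ^ a * d < 2 ^ a + 2 ^ a * d := by
          have := Nat.lt_two_pow_self (n := a); omega
      _ = 2 ^ a * (d + 1) := by ring
      _ ≤ 2 ^ a * 2 ^ a := by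
          refine Nat.mul_le_mul_left _ ?_
          calc d + 1 ≤ a := by omega
            _ ≤ 2 ^ a := (Nat.lt_two_pow_self (n := a)).le
      _ = 2 ^ (a + a) := (pow_add 2 a a).symm
      _ ≤ 2 ^ 2 ^ a := by
          refine Nat.pow_le_pow_right (by norm_num) ?_
          induction a with
          | zero => simp
          | succ n ih =>
            have : 2 ^ n ≤ 2 ^ (n + 1) := Nat.pow_le_pow_right (by norm_num) (by omega)
            have h2n : n + 1 ≤ 2 ^ n + 1 := by have := Nat.lt_two_pow_self (n := n); omega
            calc n + 1 + (n + 1) ≤ 2 ^ n + 2 ^ n := by have := Nat.lt_two_pow_self (n := n); omega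
              _ = 2 ^ (n + 1) := by ring
  calc C * (2 ^ 2 ^ a) ^ d = C * 2 ^ (2 ^ a * d) := by rw [← pow_mul]
    _ < 2 ^ a * 2 ^ (2 ^ a * d) :=
        Nat.mul_lt_mul_of_lt_of_le h1 le_rfl (Nat.pow_pos (by norm_num))
    _ = 2 ^ (a + 2 ^ a * d) := (pow_add 2 a (2 ^ a * d)).symm
    _ < 2 ^ 2 ^ 2 ^ a := Nat.pow_lt_pow_right (by norm_num) h2

/-- A natural-number polynomial is bounded by `C * n ^ d` for `n ≥ 1`. -/
lemma aux_poly_le (r : Polynomial ℕ) {n : ℕ} (hn : 1 ≤ n) :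
    r.eval n ≤ (∑ i ∈ Finset.range (r.natDegree + 1), r.coeff i) * n ^ r.natDegree := by
  rw [Polynomial.eval_eq_sum_range, Finset.sum_mul]
  refine Finset.sum_le_sum fun i hi => ?_
  exact Nat.mul_le_mul_left _ <| Nat.pow_le_pow_right hn <| by
    simpa using Nat.lt_succ_iff.mp (Finset.mem_range.mp hi)

/-- No natural-number polynomial dominates `2 ^ n`. -/
lemma aux_not_two_pow_le (r : Polynomial ℕ) : ¬ ∀ n : ℕ, 2 ^ n ≤ r.eval n := by
  intro h
  obtain ⟨n, hn1, hn⟩ := aux_exists_lt_two_pow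
    (∑ i ∈ Finset.range (r.natDegree + 1), r.coeff i) r.natDegree
  exact absurd ((h n).trans (aux_poly_le r hn1)) (not_le.mpr hn)

/-- No paddable language (over an alphabet of size at least two) is sparse:
if a nonempty language `L` over `Fin k` (`k ≥ 2`) has a padding/decoding pair
`Pad`, `Dec` with `Pad (x, y) ∈ L ↔ x ∈ L`, `Dec (Pad (x, y)) = y`, and
`|Pad (x, y)| ≤ p (|x| + |y|)` for some polynomial `p`, then there is no
polynomial `q` with `|{w ∈ L : |w| ≤ n}| ≤ q n` for all `n`. -/
theorem paddable_not_sparse (k : ℕ) (hk : 2 ≤ k)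
    (L : Set (List (Fin k))) (hL : L.Nonempty)
    (Pad : List (Fin k) × List (Fin k) → List (Fin k))
    (Dec : List (Fin k) → List (Fin k))
    (hPad : ∀ x y : List (Fin k), Pad (x, y) ∈ L ↔ x ∈ L)
    (hDec : ∀ x y : List (Fin k), Dec (Pad (x, y)) = y)
    (hpoly : ∃ p : Polynomial ℕ,
      ∀ x y : List (Fin k), (Pad (x, y)).length ≤ p.eval (x.length + y.length)) :
    ¬ ∃ q : Polynomial ℕ,
        ∀ n : ℕ, {w : List (Fin k) | w ∈ L ∧ w.length ≤ n}.ncard ≤ q.eval n := by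
  rintro ⟨q, hq⟩
  obtain ⟨p, hp⟩ := hpoly
  obtain ⟨x₀, hx₀⟩ := hL
  -- the composed polynomial r with r.eval n = q.eval (p.eval (x₀.length + n))
  set r : Polynomial ℕ :=
    q.comp (p.comp (Polynomial.X + Polynomial.C x₀.length)) with hr
  refine aux_not_two_pow_le r fun n => ?_
  have hreval : r.eval n = q.eval (p.eval (x₀.length + n)) := by
    simp [hr, Polynomial.eval_comp, add_comm]
  set m := p.eval (x₀.length + n) with hm
  set T : Set (List (Fin k)) := {w | w ∈ L ∧ w.length ≤ m} with hT
  have hTfin : T.Finite := (List.finite_length_le (Fin k) m).subset fun w hw => hw.2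
  -- inject all k^n words of length n into T
  set g : (Fin n → Fin k) → List (Fin k) := fun v => Pad (x₀, List.ofFn v) with hg
  have hginj : Function.Injective g := by
    intro v w hvw
    have := congrArg Dec hvw
    rw [hg] at this
    simp only [hDec] at this
    exact List.ofFn_injective this
  have hgsub : Set.range g ⊆ T := by
    rintro _ ⟨v, rfl⟩
    refine ⟨(hPad _ _).mpr hx₀, ?_⟩
    simpa using hp x₀ (List.ofFn v)
  have hcard : (Set.range g).ncard = k ^ n := by
    rw [← Set.image_univ, Set.ncard_image_of_injective _ hginj]
    simp [Set.ncard_univ, Nat.card_eq_fintype_card]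
  calc 2 ^ n ≤ k ^ n := Nat.pow_le_pow_left hk n
    _ = (Set.range g).ncard := hcard.symm
    _ ≤ T.ncard := Set.ncard_le_ncard hgsub hTfin
    _ ≤ q.eval m := hq m
    _ = r.eval n := hreval.symm
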